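/- Let B be a set of n-1 index pairs (i,j) with 1 ≤ i < j ≤ n. Then B generates (uniquely determines) every consistent n×n pairwise comparison matrix from its values on B if and only if the associated graph G_B on {1,...,n} is a tree. -/

import Mathlib

open SimpleGraph

-- Lemma A: a connected finite graph has at least (card V - 1) edges.
lemma aux_card_le {V : Type*} [Fintype V] (G : SimpleGraph V) (h : G.Connected) :
    Fintype.card V ≤ G.edgeSet.ncard + 1 := by
  classical
  obtain ⟨r⟩ := h.nonempty
  -- injection from {v // v ≠ r} into edgeSet
  have key : ∀ v : V, v ≠ r → ∃ e ∈ G.edgeSet, ∃ u, e = s(v, u) ∧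
      G.dist u r < G.dist v r := by
    intro v hv
    obtain ⟨p, hp⟩ := (h v r).exists_walk_length_eq_dist
    have hnil : ¬ p.Nil := SimpleGraph.Walk.not_nil_of_ne hv
    refine ⟨s(v, p.getVert 1), (p.adj_snd hnil), p.getVert 1, rfl, ?_⟩
    have h1 : G.dist (p.getVert 1) r ≤ p.tail.length := SimpleGraph.dist_le _
    have h2 : p.tail.length + 1 = p.length := SimpleGraph.Walk.length_tail_add_one hnil
    have h3 : 0 < G.dist v r := (h v r).pos_dist_of_ne hv
    omega
  choose e he u hu hlt using key
  have hinj : Function.Injective (fun v : {v : V // v ≠ r} => e v v.2) := by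
    rintro ⟨a, ha⟩ ⟨b, hb⟩ hab
    simp only at hab
    rw [hu a ha, hu b hb, Sym2.eq_iff] at hab
    rcases hab with ⟨h1, h2⟩ | ⟨h1, h2⟩
    · exact Subtype.ext h1
    · exfalso
      have l1 := hlt a ha
      have l2 := hlt b hb
      rw [h2] at l1; rw [← h1] at l2
      omega
  have hto : ∀ v : {v : V // v ≠ r}, e v v.2 ∈ G.edgeSet := fun v => he v v.2
  have : Fintype.card {v : V // v ≠ r} ≤ Nat.card G.edgeSet := by
    have : Function.Injective (fun v : {v : V // v ≠ r} => (⟨e v v.2, hto v⟩ : G.edgeSet)) := by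
      intro a b hab
      exact hinj (congrArg Subtype.val hab)
    calc Fintype.card {v : V // v ≠ r} = Nat.card {v : V // v ≠ r} := (Nat.card_eq_fintype_card).symm
      _ ≤ Nat.card G.edgeSet := Nat.card_le_card_of_injective _ this
  have hcompl : Fintype.card {v : V // v ≠ r} = Fintype.card V - 1 := by
    have := Fintype.card_subtype_compl (fun v : V => v = r)
    simpa [Fintype.card_subtype_eq] using this
  have hnc : Nat.card G.edgeSet = G.edgeSet.ncard := Nat.card_coe_set_eq _
  have hpos : 0 < Fintype.card V := Fintype.card_pos_iff.mpr ⟨r⟩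
  omega

lemma aux_connected_delete {V : Type*} (G : SimpleGraph V) (h : G.Connected) {v w : V}
    (hr : (G \ fromEdgeSet {s(v, w)}).Reachable v w) :
    (G \ fromEdgeSet {s(v, w)}).Connected := by
  rw [connected_iff]
  refine ⟨fun x y => ?_, h.nonempty⟩
  obtain ⟨p⟩ := h.preconnected x y
  induction p with
  | nil => exact Reachable.refl _
  | cons ha q ih =>
    rename_i a c b
    refine Reachable.trans ?_ ih
    by_cases hav : s(a, c) = s(v, w)
    · rw [Sym2.eq_iff] at hav
      rcases hav with ⟨rfl, rfl⟩ | ⟨rfl, rfl⟩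
      · exact hr
      · exact hr.symm
    · exact SimpleGraph.Adj.reachable (by
        rw [SimpleGraph.sdiff_adj]
        exact ⟨ha, by simp [SimpleGraph.fromEdgeSet_adj, hav]⟩)

lemma aux_tree {V : Type*} [Fintype V] (G : SimpleGraph V) (h : G.Connected)
    (hc : G.edgeSet.ncard + 1 ≤ Fintype.card V) : G.IsTree := by
  classical
  refine ⟨h, ?_⟩
  by_contra hcyc
  rw [SimpleGraph.IsAcyclic] at hcyc
  push_neg at hcyc
  obtain ⟨u, c, hcy⟩ := hcyc
  -- the cycle has a first edge
  obtain ⟨a, q, ha, rfl⟩ : ∃ (a : V) (q : G.Walk a u) (ha : G.Adj u a), c = q.cons ha := by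
    cases c with
    | nil => exact absurd hcy (by simp [SimpleGraph.Walk.isCycle_def])
    | cons ha q => exact ⟨_, q, ha, rfl⟩
  have hmem : s(u, a) ∈ (q.cons ha).edges := by simp
  have hnb : ¬ G.IsBridge s(u, a) := by
    rw [SimpleGraph.isBridge_iff_forall_cycle_notMem ha]
    push_neg
    exact ⟨u, _, hcy, hmem⟩
  have hre : (G \ fromEdgeSet {s(u, a)}).Reachable u a := by
    rw [SimpleGraph.isBridge_iff] at hnb
    push_neg at hnb
    exact hnb
  have hconn' := aux_connected_delete G h hre
  have hA := aux_card_le _ hconn'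
  have hES : (G \ fromEdgeSet {s(u, a)}).edgeSet = G.edgeSet \ {s(u, a)} := by
    rw [SimpleGraph.edgeSet_sdiff, SimpleGraph.edgeSet_fromEdgeSet]
    rw [Set.diff_diff_right]
    have : G.edgeSet ∩ {e : Sym2 V | e.IsDiag} = ∅ := by
      ext e
      simp only [Set.mem_inter_iff, Set.mem_empty_iff_false, iff_false, not_and, Set.mem_setOf_eq]
      exact fun he => G.not_isDiag_of_mem_edgeSet he
    rw [Sym2.diagSet, this, Set.union_empty]
  have hfin : G.edgeSet.Finite := G.edgeSet.toFinite
  have hcard : (G.edgeSet \ {s(u, a)}).ncard = G.edgeSet.ncard - 1 :=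
    Set.ncard_diff_singleton_of_mem ha
  have hpos : 0 < G.edgeSet.ncard := Set.ncard_pos hfin |>.mpr ⟨s(u,a), ha⟩
  rw [hES, hcard] at hA
  omega


/-- The graph on `Fin n` associated to a set `B` of index pairs. -/
def genGraph (n : ℕ) (B : Finset (Fin n × Fin n)) : SimpleGraph (Fin n) :=
  SimpleGraph.fromEdgeSet ((fun p : Fin n × Fin n => s(p.1, p.2)) '' (B : Set (Fin n × Fin n)))

/-- An `(n-1)`-set `B` of index pairs generates (uniquely determines) every
consistent PC matrix from its values on `B` iff the associated graph is a
tree. -/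
theorem generates_iff_tree (n : ℕ) (hn : 1 ≤ n)
    (B : Finset (Fin n × Fin n)) (hB : ∀ p ∈ B, p.1 < p.2)
    (hcard : B.card = n - 1) :
    (∀ M M' : Matrix (Fin n) (Fin n) ℝ,
        (∀ i j, 0 < M i j) → (∀ i j k, M i j * M j k = M i k) →
        (∀ i j, 0 < M' i j) → (∀ i j k, M' i j * M' j k = M' i k) →
        (∀ p ∈ B, M p.1 p.2 = M' p.1 p.2) → M = M')
      ↔ (genGraph n B).IsTree := by
  classical
  have hadj : ∀ {a b : Fin n}, (genGraph n B).Adj a b ↔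
      (((a, b) ∈ B ∨ (b, a) ∈ B) ∧ a ≠ b) := by
    intro a b
    rw [genGraph, SimpleGraph.fromEdgeSet_adj]
    constructor
    · rintro ⟨hmem, hne⟩
      refine ⟨?_, hne⟩
      obtain ⟨p, hp, he⟩ := hmem
      rw [Sym2.eq_iff] at he
      rcases he with ⟨h1, h2⟩ | ⟨h1, h2⟩
      · left; rw [← h1, ← h2]; exact hp
      · right; rw [← h1, ← h2]; exact hp
    · rintro ⟨hor, hne⟩
      refine ⟨?_, hne⟩
      rcases hor with h | h
      · exact ⟨(a, b), h, rfl⟩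
      · exact ⟨(b, a), h, by rw [Sym2.eq_swap]⟩
  constructor
  · -- generates → tree
    intro hgen
    -- edge count bound
    have hle : (genGraph n B).edgeSet.ncard ≤ n - 1 := by
      have h1 : (genGraph n B).edgeSet ⊆
          ↑(B.image (fun p : Fin n × Fin n => s(p.1, p.2))) := by
        intro e he
        rw [genGraph, SimpleGraph.edgeSet_fromEdgeSet] at he
        obtain ⟨⟨p, hp, rfl⟩, _⟩ := he
        simp only [Finset.coe_image, Set.mem_image, Finset.mem_coe]
        exact ⟨p, hp, rfl⟩
      calc (genGraph n B).edgeSet.ncard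
          ≤ (↑(B.image (fun p : Fin n × Fin n => s(p.1, p.2))) : Set (Sym2 (Fin n))).ncard :=
            Set.ncard_le_ncard h1 (Set.toFinite _)
        _ = (B.image (fun p : Fin n × Fin n => s(p.1, p.2))).card := Set.ncard_coe_finset _
        _ ≤ B.card := Finset.card_image_le
        _ = n - 1 := hcard
    -- connectivity
    have hconn : (genGraph n B).Connected := by
      rw [connected_iff]
      refine ⟨?_, ⟨⟨0, hn⟩⟩⟩
      by_contra hpre
      rw [SimpleGraph.Preconnected] at hpre
      push_neg at hpre
      obtain ⟨u, v, huv⟩ := hpre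
      set f : Fin n → ℝ := fun x => if (genGraph n B).Reachable u x then 2 else 1 with hf
      have hfpos : ∀ x, 0 < f x := by
        intro x; rw [hf]; dsimp only; split <;> norm_num
      set M : Matrix (Fin n) (Fin n) ℝ := fun _ _ => 1 with hM
      set M' : Matrix (Fin n) (Fin n) ℝ := fun i j => f i / f j with hM'
      have heq : M = M' := by
        refine hgen M M' (fun i j => by norm_num [hM]) (fun i j k => by norm_num [hM])
          (fun i j => div_pos (hfpos i) (hfpos j)) (fun i j k => by
            rw [hM']; dsimp only
            rw [div_mul_div_comm, mul_comm (f j) (f k), mul_div_mul_right _ _ (hfpos j).ne']) ?_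
        intro p hp
        have hadj' : (genGraph n B).Adj p.1 p.2 :=
          hadj.mpr ⟨Or.inl hp, (hB p hp).ne⟩
        have : (genGraph n B).Reachable u p.1 ↔ (genGraph n B).Reachable u p.2 :=
          ⟨fun h => h.trans hadj'.reachable, fun h => h.trans hadj'.symm.reachable⟩
        rw [hM, hM', hf]
        dsimp only
        by_cases h : (genGraph n B).Reachable u p.1
        · rw [if_pos h, if_pos (this.mp h)]; norm_num
        · rw [if_neg h, if_neg (fun hh => h (this.mpr hh))]; norm_num
      have := congrFun (congrFun heq u) v
      rw [hM, hM', hf] at this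
      dsimp only at this
      rw [if_pos (Reachable.refl u), if_neg huv] at this
      norm_num at this
    exact aux_tree _ hconn (by have : Fintype.card (Fin n) = n := Fintype.card_fin n; omega)
  · -- tree → generates
    intro htree M M' hMpos hMcon hM'pos hM'con hagree
    have hMone : ∀ a, M a a = 1 := fun a =>
      mul_right_cancel₀ (hMpos a a).ne' (by rw [hMcon a a a, one_mul])
    have hM'one : ∀ a, M' a a = 1 := fun a =>
      mul_right_cancel₀ (hM'pos a a).ne' (by rw [hM'con a a a, one_mul])
    have hedge : ∀ {a b : Fin n}, (genGraph n B).Adj a b → M a b = M' a b := by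
      intro a b hab
      rcases (hadj.mp hab).1 with h | h
      · exact hagree (a, b) h
      · have h1 : M b a = M' b a := hagree (b, a) h
        have h2 : M a b * M b a = 1 := by rw [hMcon a b a, hMone]
        have h3 : M' a b * M' b a = 1 := by rw [hM'con a b a, hM'one]
        rw [h1] at h2
        exact mul_right_cancel₀ (hM'pos b a).ne' (h2.trans h3.symm)
    funext i j
    obtain ⟨p⟩ := htree.isConnected.preconnected i j
    induction p with
    | nil => rw [hMone, hM'one]
    | cons ha q ih =>
      rename_i a c b
      rw [← hMcon a c b, ← hM'con a c b, hedge ha, ih]
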